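/- Let n ≥ 3, 2 ≤ k, 2k < n, 0 < h < h* where h* = (2k/(n-2k))·((n-2k)/n)^(n/(2k)). Then the equation H(0,y) = 0, where H(x,y) = h + e^(-ny) - e^((2k-n)y)(1-x²)^k, has exactly two solutions y = ξ₋ < ξ₊, and these are simple roots: the derivative of y ↦ H(0,y) is nonzero at each. -/

import Mathlib

lemma two_roots_aux (A B h : ℝ) (hB : 0 < B) (hBA : B < A) (hh0 : 0 < h)
    (hh1 : h < (A - B) / B * (B / A) ^ (A / (A - B))) :
    ∃ ξm ξp : ℝ, ξm < ξp ∧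
      h + Real.exp (-A * ξm) - Real.exp (-B * ξm) = 0 ∧
      h + Real.exp (-A * ξp) - Real.exp (-B * ξp) = 0 ∧
      (∀ y : ℝ, h + Real.exp (-A * y) - Real.exp (-B * y) = 0 → y = ξm ∨ y = ξp) ∧
      deriv (fun y => h + Real.exp (-A * y) - Real.exp (-B * y)) ξm ≠ 0 ∧
      deriv (fun y => h + Real.exp (-A * y) - Real.exp (-B * y)) ξp ≠ 0 := by
  have hA : 0 < A := hB.trans hBA
  have hS : 0 < A - B := sub_pos.mpr hBA
  set f : ℝ → ℝ := fun y => h + Real.exp (-A * y) - Real.exp (-B * y) with hf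
  set ys : ℝ := (Real.log A - Real.log B) / (A - B) with hys
  -- derivative
  have hderiv : ∀ y : ℝ, HasDerivAt f (B * Real.exp (-B * y) - A * Real.exp (-A * y)) y := by
    intro y
    have h1 : HasDerivAt (fun y : ℝ => Real.exp (-A * y)) (Real.exp (-A * y) * -A) y := by
      simpa using ((hasDerivAt_id y).const_mul (-A)).exp
    have h2 : HasDerivAt (fun y : ℝ => Real.exp (-B * y)) (Real.exp (-B * y) * -B) y := by
      simpa using ((hasDerivAt_id y).const_mul (-B)).exp
    have := (h1.const_add h).sub h2
    exact this.congr_deriv (by ring)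
  have hcont : Continuous f := by fun_prop
  -- sign of derivative
  have key : ∀ y : ℝ, B * Real.exp (-B * y) < A * Real.exp (-A * y) ↔ y < ys := by
    intro y
    rw [← Real.log_lt_log_iff (by positivity) (by positivity),
      Real.log_mul hB.ne' (Real.exp_ne_zero _), Real.log_mul hA.ne' (Real.exp_ne_zero _),
      Real.log_exp, Real.log_exp, hys, lt_div_iff₀ hS]
    constructor <;> intro <;> nlinarith
  have key2 : ∀ y : ℝ, A * Real.exp (-A * y) < B * Real.exp (-B * y) ↔ ys < y := by
    intro y
    rw [← Real.log_lt_log_iff (by positivity) (by positivity),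
      Real.log_mul hA.ne' (Real.exp_ne_zero _), Real.log_mul hB.ne' (Real.exp_ne_zero _),
      Real.log_exp, Real.log_exp, hys, div_lt_iff₀ hS]
    constructor <;> intro <;> nlinarith
  -- monotonicity
  have hanti : StrictAntiOn f (Set.Iic ys) := by
    apply strictAntiOn_of_deriv_neg (convex_Iic ys) hcont.continuousOn
    intro y hy
    rw [interior_Iic] at hy
    rw [(hderiv y).deriv]
    have := (key y).mpr hy
    linarith
  have hmono : StrictMonoOn f (Set.Ici ys) := by
    apply strictMonoOn_of_deriv_pos (convex_Ici ys) hcont.continuousOn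
    intro y hy
    rw [interior_Ici] at hy
    rw [(hderiv y).deriv]
    have := (key2 y).mpr hy
    linarith
  -- value at ys is negative
  have hABpos : (0:ℝ) < A / B := div_pos hA hB
  have e1 : Real.exp (-A * ys) = (A / B) ^ (-(A / (A - B))) := by
    rw [Real.rpow_def_of_pos hABpos, Real.log_div hA.ne' hB.ne', hys]
    congr 1
    ring
  have e2 : Real.exp (-B * ys) = (A / B) ^ (-(A / (A - B))) * (A / B) := by
    rw [Real.rpow_def_of_pos hABpos, Real.log_div hA.ne' hB.ne', hys]
    rw [show (A / B : ℝ) = Real.exp (Real.log A - Real.log B) from by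
      rw [Real.exp_sub, Real.exp_log hA, Real.exp_log hB]]
    rw [← Real.exp_add]
    congr 1
    field_simp
    ring
  have hhrw : (B / A : ℝ) ^ (A / (A - B)) = (A / B) ^ (-(A / (A - B))) := by
    rw [← inv_div A B, Real.inv_rpow hABpos.le, ← Real.rpow_neg hABpos.le]
  set t : ℝ := (A / B) ^ (-(A / (A - B))) with ht
  have ht0 : 0 < t := Real.rpow_pos_of_pos hABpos _
  have htid : t * (A / B) - t = (A - B) / B * t := by
    field_simp
  have hfys : f ys < 0 := by
    have hh1' : h < (A - B) / B * t := by rwa [hhrw] at hh1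
    simp only [hf, e1, e2, ← ht]
    linarith
  -- left root
  have hf0 : f 0 = h := by simp [hf]
  have hys0 : 0 < ys := by
    rw [hys]
    apply div_pos _ hS
    exact sub_pos.mpr (Real.log_lt_log hB hBA)
  obtain ⟨ξm, hξmem, hξm⟩ : ∃ ξ ∈ Set.Icc (0:ℝ) ys, f ξ = 0 := by
    have := intermediate_value_Icc' hys0.le hcont.continuousOn (a := 0) (b := ys)
    have h0mem : (0:ℝ) ∈ Set.Icc (f ys) (f 0) := ⟨hfys.le, by rw [hf0]; exact hh0.le⟩
    obtain ⟨ξ, hξ1, hξ2⟩ := this h0mem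
    exact ⟨ξ, hξ1, hξ2⟩
  have hξmys : ξm < ys := lt_of_le_of_ne hξmem.2 (by rintro rfl; rw [hξm] at hfys; exact lt_irrefl _ hfys)
  -- right root
  set y1 : ℝ := max (ys + 1) ((1 - Real.log h) / B) with hy1
  have hysy1 : ys < y1 := lt_of_lt_of_le (lt_add_one _) (le_max_left _ _)
  have hfy1 : 0 < f y1 := by
    have h2 : Real.exp (-B * y1) < h := by
      have hle : (1 - Real.log h) / B ≤ y1 := le_max_right _ _
      rw [div_le_iff₀ hB] at hle
      calc Real.exp (-B * y1) < Real.exp (Real.log h) := by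
            apply Real.exp_lt_exp.mpr; nlinarith
        _ = h := Real.exp_log hh0
    have := Real.exp_pos (-A * y1)
    simp only [hf]
    linarith
  obtain ⟨ξp, hξpmem, hξp⟩ : ∃ ξ ∈ Set.Icc ys y1, f ξ = 0 := by
    have := intermediate_value_Icc hysy1.le hcont.continuousOn (a := ys) (b := y1)
    have h0mem : (0:ℝ) ∈ Set.Icc (f ys) (f y1) := ⟨hfys.le, hfy1.le⟩
    obtain ⟨ξ, hξ1, hξ2⟩ := this h0mem
    exact ⟨ξ, hξ1, hξ2⟩
  have hysξp : ys < ξp := lt_of_le_of_ne hξpmem.1 (by rintro rfl; rw [hξp] at hfys; exact lt_irrefl _ hfys)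
  refine ⟨ξm, ξp, hξmys.trans hysξp, hξm, hξp, ?_, ?_, ?_⟩
  · intro y hy
    have hy' : f y = 0 := hy
    rcases lt_trichotomy y ys with hlt | heq | hgt
    · left
      exact hanti.injOn (Set.mem_Iic.mpr hlt.le) (Set.mem_Iic.mpr hξmys.le) (by rw [hy', hξm])
    · exfalso; rw [heq] at hy'; rw [hy'] at hfys; exact lt_irrefl _ hfys
    · right
      exact hmono.injOn (Set.mem_Ici.mpr hgt.le) (Set.mem_Ici.mpr hysξp.le) (by rw [hy', hξp])
  · rw [(hderiv ξm).deriv]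
    have := (key ξm).mpr hξmys
    intro hc; nlinarith
  · rw [(hderiv ξp).deriv]
    have := (key2 ξp).mpr hysξp
    intro hc; nlinarith

/-- For `2k < n` and `0 < h < h*`, the equation `H(0,y) = 0`, where
`H(x,y) = h + e^(-ny) - e^((2k-n)y)(1-x²)^k`, has exactly two solutions
`ξ₋ < ξ₊`, both simple roots of `y ↦ H(0,y)`. -/
theorem two_simple_roots_of_H (n k : ℕ) (hn : 3 ≤ n) (hk : 2 ≤ k) (hkn : 2 * k < n)
    (h : ℝ) (hh0 : 0 < h)
    (hh1 : h < 2 * (k : ℝ) / ((n : ℝ) - 2 * k)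
        * (((n : ℝ) - 2 * k) / n) ^ ((n : ℝ) / (2 * k))) :
    ∃ ξm ξp : ℝ, ξm < ξp ∧
      h + Real.exp (-(n : ℝ) * ξm) - Real.exp ((2 * (k : ℝ) - n) * ξm) = 0 ∧
      h + Real.exp (-(n : ℝ) * ξp) - Real.exp ((2 * (k : ℝ) - n) * ξp) = 0 ∧
      (∀ y : ℝ, h + Real.exp (-(n : ℝ) * y) - Real.exp ((2 * (k : ℝ) - n) * y) = 0 →
        y = ξm ∨ y = ξp) ∧
      deriv (fun y => h + Real.exp (-(n : ℝ) * y) - Real.exp ((2 * (k : ℝ) - n) * y)) ξm ≠ 0 ∧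
      deriv (fun y => h + Real.exp (-(n : ℝ) * y) - Real.exp ((2 * (k : ℝ) - n) * y)) ξp ≠ 0 := by
  have hkn' : (2 * k : ℝ) < n := by exact_mod_cast hkn
  have hB : (0:ℝ) < (n : ℝ) - 2 * k := by push_cast at hkn' ⊢; linarith
  have hk0 : (0:ℝ) < (k : ℝ) := by
    have : (2:ℝ) ≤ k := by exact_mod_cast hk
    linarith
  have hBA : (n : ℝ) - 2 * k < (n : ℝ) := by linarith
  have hh1' : h < ((n:ℝ) - ((n:ℝ) - 2 * k)) / ((n:ℝ) - 2 * k)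
      * (((n:ℝ) - 2 * k) / n) ^ ((n:ℝ) / ((n:ℝ) - ((n:ℝ) - 2 * k))) := by
    rw [show (n:ℝ) - ((n:ℝ) - 2 * (k:ℝ)) = 2 * (k:ℝ) from by ring]
    exact hh1
  have key := two_roots_aux (n : ℝ) ((n : ℝ) - 2 * k) h hB hBA hh0 hh1'
  simpa only [show ∀ y : ℝ, (2 * (k:ℝ) - (n:ℝ)) * y = -((n:ℝ) - 2 * (k:ℝ)) * y
    from fun y => by ring] using key
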